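/- Let m, n be nonnegative integers with v_m = w_n, and let d ∈ ℤ[i][X] satisfy c*d + 4 = (v_m)^2. If d = d₋, i.e. if 2*d = 2*(a+b+c) + a*b*c + r*s*t or 2*d = 2*(a+b+c) + a*b*c − r*s*t, and deg(d) < γ, then m ≤ 1 and n ≤ 1. -/
import Mathlib


open Polynomial

private lemma GI_two_ne : (2 : GaussianInt[X]) ≠ 0 := by norm_num
private lemma GI_four_ne : (4 : GaussianInt[X]) ≠ 0 := by norm_num

private lemma GI_natDegree_two_mul (p : GaussianInt[X]) :
    (2 * p).natDegree = p.natDegree := by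
  rcases eq_or_ne p 0 with h | h
  · simp [h]
  · rw [natDegree_mul GI_two_ne h]; simp

private lemma GI_ne_zero_of_deg_pos {p : GaussianInt[X]} (h : 0 < p.natDegree) :
    p ≠ 0 := by
  intro h0; simp [h0] at h

/-- Key degree-growth lemma: every term `v m` with `m ≥ 2` has degree at least `deg c`. -/
private lemma seq_deg_ge
    (a c s z0 x0 d0 : GaussianInt[X]) (v : ℕ → GaussianInt[X])
    (ha : a ≠ 0) (hc : c ≠ 0) (hac : a ≠ c) (hγ : 0 < c.natDegree)
    (hs : a * c + 4 = s ^ 2)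
    (hz0 : a * z0 ^ 2 - c * x0 ^ 2 = 4 * (a - c))
    (hz0deg : 4 * z0.natDegree + a.natDegree ≤ 3 * c.natDegree)
    (hx0deg : 4 * x0.natDegree ≤ a.natDegree + c.natDegree)
    (hd0c : c * d0 + 4 = z0 ^ 2) (hd0a : a * d0 + 4 = x0 ^ 2)
    (hv0 : v 0 = z0) (hv1 : 2 * v 1 = s * z0 + c * x0)
    (hvrec : ∀ k, v (k + 2) = s * v (k + 1) - v k)
    (m : ℕ) (hm : 2 ≤ m) : c.natDegree ≤ (v m).natDegree := by
  set α := a.natDegree with hα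
  set γ := c.natDegree with hγdef
  -- degree of s
  have hacdeg : (a * c).natDegree = α + γ := natDegree_mul ha hc
  have hac4deg : (a * c + 4).natDegree = α + γ := by
    rw [natDegree_add_eq_left_of_natDegree_lt, hacdeg]
    rw [hacdeg]
    simpa using by omega
  have hsne : s ≠ 0 := by
    intro h0
    have h1 : a * c + 4 = 0 := by rw [hs, h0]; ring
    rw [h1, natDegree_zero] at hac4deg
    omega
  have hsdeg : 2 * s.natDegree = α + γ := by
    have h1 : (s ^ 2).natDegree = 2 * s.natDegree := natDegree_pow s 2
    rw [← h1, ← hs, hac4deg]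
  -- z0 ≠ 0
  have hz0ne : z0 ≠ 0 := by
    intro h0
    rw [h0] at hd0c
    have hcd : c * d0 = -4 := by linear_combination hd0c
    have hd0ne : d0 ≠ 0 := by
      intro h1; rw [h1, mul_zero] at hcd; exact GI_four_ne (by linear_combination hcd)
    have hmm : (c * d0).natDegree = γ + d0.natDegree := natDegree_mul hc hd0ne
    rw [hcd] at hmm
    simp only [natDegree_neg, natDegree_ofNat] at hmm
    omega
  -- a*z0 + s*x0 ≠ 0
  have hu : a * z0 + s * x0 ≠ 0 := by
    intro h0
    have h1 : (a * z0) ^ 2 = (s * x0) ^ 2 := by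
      have hneg : a * z0 = -(s * x0) := by linear_combination h0
      rw [hneg]; ring
    have hx0sq : x0 ^ 2 = a * (a - c) := by
      have h2 : 4 * (x0 ^ 2) = 4 * (a * (a - c)) := by
        linear_combination a * hz0 - h1 + x0 ^ 2 * hs
      exact mul_left_cancel₀ GI_four_ne h2
    have hkey : a * (d0 - a + c) = -4 := by linear_combination hd0a + hx0sq
    have hene : d0 - a + c ≠ 0 := by
      intro h1; rw [h1, mul_zero] at hkey; exact GI_four_ne (by linear_combination hkey)
    have hαzero : α = 0 := by
      have hmm : (a * (d0 - a + c)).natDegree = α + (d0 - a + c).natDegree :=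
        natDegree_mul ha hene
      rw [hkey] at hmm
      simp only [natDegree_neg, natDegree_ofNat] at hmm
      omega
    have hx0ne : x0 ≠ 0 := by
      intro h1
      rw [h1] at hx0sq
      have hne : a * (a - c) ≠ 0 := mul_ne_zero ha (sub_ne_zero.mpr hac)
      exact hne (by linear_combination -hx0sq)
    have hamc : (a - c).natDegree = γ := by
      rw [natDegree_sub_eq_right_of_natDegree_lt]; omega
    have hfin : 2 * x0.natDegree = γ := by
      have h1' : (x0 ^ 2).natDegree = 2 * x0.natDegree := natDegree_pow x0 2
      have h2' : (a * (a - c)).natDegree = α + γ := by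
        rw [natDegree_mul ha (sub_ne_zero.mpr hac), hamc]
      rw [hx0sq, h2'] at h1'
      omega
    omega
  -- degree of v 2
  have h2v2 : 2 * v 2 = c * (a * z0 + s * x0) + 2 * z0 := by
    have h0 : v 2 = s * v 1 - v 0 := hvrec 0
    linear_combination 2 * h0 + s * hv1 - 2 * hv0 - z0 * hs
  have hcu : (c * (a * z0 + s * x0)).natDegree = γ + (a * z0 + s * x0).natDegree :=
    natDegree_mul hc hu
  have h2z0 : (2 * z0).natDegree = z0.natDegree := GI_natDegree_two_mul z0
  have hv2deg : (v 2).natDegree = γ + (a * z0 + s * x0).natDegree := by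
    have h1 : (c * (a * z0 + s * x0) + 2 * z0).natDegree
        = γ + (a * z0 + s * x0).natDegree := by
      rw [natDegree_add_eq_left_of_natDegree_lt, hcu]
      rw [hcu, h2z0]
      omega
    rw [← GI_natDegree_two_mul (v 2), h2v2, h1]
  have hv2γ : γ ≤ (v 2).natDegree := by omega
  -- degree of v 1
  have hv1deg : 4 * (v 1).natDegree ≤ α + 5 * γ := by
    have h1 : (v 1).natDegree = (s * z0 + c * x0).natDegree := by
      rw [← GI_natDegree_two_mul (v 1), hv1]
    have h2 : (s * z0 + c * x0).natDegree
        ≤ max (s.natDegree + z0.natDegree) (c.natDegree + x0.natDegree) :=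
      le_trans (natDegree_add_le _ _) (max_le_max natDegree_mul_le natDegree_mul_le)
    rw [h1]
    rcases max_cases (s.natDegree + z0.natDegree) (c.natDegree + x0.natDegree) with
      ⟨hEq, _⟩ | ⟨hEq, _⟩ <;> rw [hEq] at h2 <;> omega
  -- induction invariant
  have main : ∀ k, γ ≤ (v (k + 2)).natDegree ∧ (v (k + 2)).natDegree < (v (k + 3)).natDegree := by
    intro k
    induction k with
    | zero =>
      show γ ≤ (v 2).natDegree ∧ (v 2).natDegree < (v 3).natDegree
      refine ⟨hv2γ, ?_⟩
      have hv2ne : v 2 ≠ 0 := GI_ne_zero_of_deg_pos (by omega)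
      have hsv2 : (s * v 2).natDegree = s.natDegree + (v 2).natDegree :=
        natDegree_mul hsne hv2ne
      have hlt : (v 1).natDegree < (s * v 2).natDegree := by
        rw [hsv2]; omega
      have hd3 : (v 3).natDegree = s.natDegree + (v 2).natDegree := by
        rw [hvrec 1, natDegree_sub_eq_left_of_natDegree_lt hlt, hsv2]
      omega
    | succ k ih =>
      show γ ≤ (v (k + 3)).natDegree ∧ (v (k + 3)).natDegree < (v (k + 4)).natDegree
      obtain ⟨ih1, ih2⟩ := ih
      refine ⟨by omega, ?_⟩
      have hne : v (k + 3) ≠ 0 := GI_ne_zero_of_deg_pos (by omega)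
      have hsv : (s * v (k + 3)).natDegree = s.natDegree + (v (k + 3)).natDegree :=
        natDegree_mul hsne hne
      have hlt : (v (k + 2)).natDegree < (s * v (k + 3)).natDegree := by
        rw [hsv]; omega
      have hd4 : (v (k + 4)).natDegree = s.natDegree + (v (k + 3)).natDegree := by
        rw [hvrec (k + 2), natDegree_sub_eq_left_of_natDegree_lt hlt, hsv]
      omega
  obtain ⟨k, rfl⟩ : ∃ k, m = k + 2 := ⟨m - 2, by omega⟩
  exact (main k).1

/-- If the extension d coming from v_m = w_n equals d₋, then m, n ∈ {0, 1}. -/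
theorem d_minus_forces_small_indices
    (a b c r s t : GaussianInt[X])
    (ha : a ≠ 0) (hb : b ≠ 0) (hc : c ≠ 0)
    (hab : a ≠ b) (hac : a ≠ c) (hbc : b ≠ c)
    (hr : a * b + 4 = r ^ 2) (hs : a * c + 4 = s ^ 2) (ht : b * c + 4 = t ^ 2)
    (hαβ : a.natDegree ≤ b.natDegree) (hβγ : b.natDegree ≤ c.natDegree)
    (hβ : 0 < b.natDegree) (hγ : 0 < c.natDegree)
    (z0 x0 d0 : GaussianInt[X]) (v : ℕ → GaussianInt[X])
    (hz0 : a * z0 ^ 2 - c * x0 ^ 2 = 4 * (a - c))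
    (hz0deg : 4 * z0.natDegree + a.natDegree ≤ 3 * c.natDegree)
    (hx0deg : 4 * x0.natDegree ≤ a.natDegree + c.natDegree)
    (hd0c : c * d0 + 4 = z0 ^ 2) (hd0a : a * d0 + 4 = x0 ^ 2)
    (hv0 : v 0 = z0) (hv1 : 2 * v 1 = s * z0 + c * x0)
    (hvrec : ∀ k, v (k + 2) = s * v (k + 1) - v k)
    (z1 y1 d1 : GaussianInt[X]) (w : ℕ → GaussianInt[X])
    (hz1 : b * z1 ^ 2 - c * y1 ^ 2 = 4 * (b - c))
    (hz1deg : 4 * z1.natDegree + b.natDegree ≤ 3 * c.natDegree)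
    (hy1deg : 4 * y1.natDegree ≤ b.natDegree + c.natDegree)
    (hd1c : c * d1 + 4 = z1 ^ 2) (hd1b : b * d1 + 4 = y1 ^ 2)
    (hw0 : w 0 = z1) (hw1 : 2 * w 1 = t * z1 + c * y1)
    (hwrec : ∀ k, w (k + 2) = t * w (k + 1) - w k)
    (m n : ℕ) (heq : v m = w n)
    (d : GaussianInt[X]) (hd : c * d + 4 = (v m) ^ 2)
    (hdmin : 2 * d = 2 * (a + b + c) + a * b * c + r * s * t ∨
             2 * d = 2 * (a + b + c) + a * b * c - r * s * t)
    (hddeg : d.natDegree < c.natDegree) :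
    m ≤ 1 ∧ n ≤ 1 := by
  -- the degree of v m is strictly less than deg c
  have hvmdeg : (v m).natDegree < c.natDegree := by
    have h1 : 2 * (v m).natDegree = (c * d + 4).natDegree := by
      rw [hd, natDegree_pow]
    have h2 : (c * d + 4).natDegree ≤ c.natDegree + d.natDegree := by
      refine le_trans (natDegree_add_le _ _) (max_le natDegree_mul_le ?_)
      simp
    omega
  constructor
  · by_contra hm
    have := seq_deg_ge a c s z0 x0 d0 v ha hc hac hγ hs hz0 hz0deg hx0deg hd0c hd0a
      hv0 hv1 hvrec m (by omega)
    omega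
  · by_contra hn
    have := seq_deg_ge b c t z1 y1 d1 w hb hc hbc hγ ht hz1 hz1deg hy1deg hd1c hd1b
      hw0 hw1 hwrec n (by omega)
    rw [heq] at hvmdeg
    omega
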